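/- Conversely, suppose ρ : ℝ_{≥0} × Λ_odd → B is a map of the form ρ(t,θ) = e^{-tH}(1 + θA) with H even, A odd in a ℤ/2-graded Banach algebra B, satisfying the super semigroup law ρ(t,θ)ρ(t',θ') = ρ(t+t'+θθ', θ+θ'). Then H = A². In particular, the representation is completely determined by the single odd element A. -/

import Mathlib

lemma exp_of_sq_zero {C : Type*} [NormedRing C] [NormedAlgebra ℝ C] [CompleteSpace C]
    (x : C) (hx : x * x = 0) : NormedSpace.exp x = 1 + x := by
  rw [NormedSpace.exp_eq_tsum (𝕂 := ℝ)]
  have h : ∀ n ∉ ({0, 1} : Finset ℕ), (((n.factorial : ℝ))⁻¹ • x ^ n) = 0 := by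
    intro n hn
    simp only [Finset.mem_insert, Finset.mem_singleton] at hn
    have h2 : x ^ n = 0 := by
      have : x ^ n = x * x * x ^ (n - 2) := by
        rw [← pow_two, ← pow_add]
        congr 1
        omega
      rw [this, hx, zero_mul]
    rw [h2, smul_zero]
  show (∑' n : ℕ, ((n.factorial : ℝ))⁻¹ • x ^ n) = 1 + x
  rw [tsum_eq_sum h]
  simp [Finset.sum_pair]

/-- Conversely, if `ρ(t,θ) = e^{-tH}(1 + θA)` (with `H` even, `A` odd,
both lying in the "constant" subalgebra `B`, and `θ, θ'` genuine Grassmann parameters,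
so that multiplication by `θθ'` is injective on `B`) satisfies the super semigroup law
`ρ(t,θ)ρ(t',θ') = ρ(t + t' + θθ', θ + θ')` for all `t, t' ≥ 0`, then `H = A²`:
the representation is completely determined by the single odd element `A`. -/
theorem stmt_3 {C : Type*} [NormedRing C] [NormedAlgebra ℝ C] [CompleteSpace C]
    (B : Subalgebra ℝ C) (H A θ θ' : C)
    (hH : H ∈ B) (hA : A ∈ B)
    (hθ : θ * θ = 0) (hθ' : θ' * θ' = 0)
    (hanti : θ * θ' = -(θ' * θ))
    (hθA : θ * A = -(A * θ)) (hθ'A : θ' * A = -(A * θ'))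
    (hθH : θ * H = H * θ) (hθ'H : θ' * H = H * θ')
    (hcentral : ∀ x : C, θ * θ' * x = x * (θ * θ'))
    (hinj : ∀ x ∈ B, ∀ y ∈ B, θ * θ' * x = θ * θ' * y → x = y)
    (hlaw : ∀ t t' : ℝ, 0 ≤ t → 0 ≤ t' →
      (NormedSpace.exp (-(t • H)) * (1 + θ * A)) *
        (NormedSpace.exp (-(t' • H)) * (1 + θ' * A)) =
      NormedSpace.exp (-((t + t') • H + θ * θ' * H)) * (1 + (θ + θ') * A)) :
    H = A * A := by
  -- basic Grassmann identities
  have hθ'θ : θ' * θ = -(θ * θ')  := by rw [hanti, neg_neg]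
  have hzz : (θ * θ') * (θ * θ') = 0 := by
    calc (θ * θ') * (θ * θ') = θ * (θ' * θ) * θ' := by noncomm_ring
    _ = -(θ * θ * (θ' * θ'))  := by rw [hθ'θ]; noncomm_ring
    _ = 0 := by rw [hθ, zero_mul, neg_zero]
  have hzzθ : θ * θ' * θ = 0 := by
    calc θ * θ' * θ = θ * (θ' * θ) := by rw [mul_assoc]
    _ = -(θ * θ * θ') := by rw [hθ'θ]; noncomm_ring
    _ = 0 := by rw [hθ, zero_mul, neg_zero]
  have hzzθ' : θ * θ' * θ' = 0 := by
    rw [mul_assoc, hθ', mul_zero]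
  -- the square of -(θθ'H) is zero
  have hn : (-(θ * θ' * H)) * (-(θ * θ' * H)) = 0 := by
    have step : θ * θ' * H * (θ * θ' * H) = 0 := by
      calc θ * θ' * H * (θ * θ' * H) = θ * θ' * (H * (θ * θ')) * H := by noncomm_ring
      _ = θ * θ' * (θ * θ' * H) * H := by rw [← hcentral H]
      _ = θ * θ' * (θ * θ') * (H * H) := by noncomm_ring
      _ = 0 := by rw [hzz, zero_mul]
    rw [neg_mul_neg, step]
  have key := hlaw 0 0 le_rfl le_rfl
  rw [zero_smul, neg_zero, NormedSpace.exp_zero] at key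
  rw [show ((0:ℝ) + 0) • H = (0:C) by rw [add_zero, zero_smul]] at key
  rw [zero_add, exp_of_sq_zero _ hn] at key
  -- expand both sides
  have lhs : (1 * (1 + θ * A)) * (1 * (1 + θ' * A))
      = 1 + θ * A + θ' * A + -(θ * θ' * (A * A)) := by
    have h1 : θ * A * (θ' * A) = -(θ * θ' * (A * A)) := by
      calc θ * A * (θ' * A) = θ * (A * θ') * A := by noncomm_ring
      _ = -(θ * (θ' * A) * A) := by rw [show A * θ' = -(θ' * A) by rw [hθ'A, neg_neg]]; noncomm_ring
      _ = -(θ * θ' * (A * A)) := by noncomm_ring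
    calc (1 * (1 + θ * A)) * (1 * (1 + θ' * A))
        = 1 + θ * A + θ' * A + θ * A * (θ' * A) := by noncomm_ring
    _ = 1 + θ * A + θ' * A + -(θ * θ' * (A * A)) := by rw [h1]
  have rhs : (1 + -(θ * θ' * H)) * (1 + (θ + θ') * A)
      = 1 + θ * A + θ' * A + -(θ * θ' * H) := by
    have h2 : θ * θ' * H * ((θ + θ') * A) = 0 := by
      calc θ * θ' * H * ((θ + θ') * A)
          = H * (θ * θ' * θ + θ * θ' * θ') * A := by rw [hcentral H]; noncomm_ring
      _ = 0 := by rw [hzzθ, hzzθ', add_zero, mul_zero, zero_mul]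
    calc (1 + -(θ * θ' * H)) * (1 + (θ + θ') * A)
        = 1 + θ * A + θ' * A + -(θ * θ' * H) + -(θ * θ' * H * ((θ + θ') * A)) := by
          noncomm_ring
    _ = 1 + θ * A + θ' * A + -(θ * θ' * H) := by rw [h2, neg_zero, add_zero]
  rw [lhs, rhs] at key
  have : θ * θ' * H = θ * θ' * (A * A) := by
    have := add_left_cancel key
    rw [neg_inj] at this
    exact this.symm
  exact hinj H hH (A * A) (mul_mem hA hA) this
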